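/- Let S = ℂ[x,y,z] and Q = (x³ + y³ + z³)·(x³ + y³). The S-module of Jacobian syzygies of Q, i.e., the kernel of the S-linear map S³ → S sending (a,b,c) to a·(∂Q/∂x) + b·(∂Q/∂y) + c·(∂Q/∂z), is generated by two elements, which can be chosen with all components homogeneous, one syzygy of degree 2 and one syzygy of degree 3. -/

import Mathlib

open MvPolynomial

private lemma el6_prime_X0 : Prime (X 0 : MvPolynomial (Fin 3) ℂ) := by
  rw [← MulEquiv.prime_iff (finSuccEquiv ℂ 2).toMulEquiv]
  have h : (finSuccEquiv ℂ 2).toMulEquiv (X 0) = Polynomial.X := finSuccEquiv_X_zero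
  rw [h]; exact Polynomial.prime_X

private lemma el6_prime_X (i : Fin 3) : Prime (X i : MvPolynomial (Fin 3) ℂ) := by
  have h := el6_prime_X0
  rw [← MulEquiv.prime_iff (renameEquiv ℂ (Equiv.swap (0 : Fin 3) i)).toMulEquiv] at h
  have e : (renameEquiv ℂ (Equiv.swap (0 : Fin 3) i)).toMulEquiv (X 0)
      = (X i : MvPolynomial (Fin 3) ℂ) := by
    simp [renameEquiv_apply, rename_X]
  rwa [e] at h

private lemma el6_ndvd_zg :
    ¬ (X 2 : MvPolynomial (Fin 3) ℂ) ∣ (X 0 ^ 3 + X 1 ^ 3) := by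
  rintro ⟨c, hc⟩
  have := congrArg (eval (fun j : Fin 3 => if j = 0 then (1:ℂ) else 0)) hc
  simp at this

private lemma el6_ndvd_xy :
    ¬ (X 0 : MvPolynomial (Fin 3) ℂ) ∣ (X 1 ^ 2) := by
  rintro ⟨c, hc⟩
  have := congrArg (eval (fun j : Fin 3 => if j = 1 then (1:ℂ) else 0)) hc
  simp at this

private lemma el6_h_ne :
    (2 * X 0 ^ 3 + 2 * X 1 ^ 3 + X 2 ^ 3 : MvPolynomial (Fin 3) ℂ) ≠ 0 := by
  intro hc
  have := congrArg (eval (fun j : Fin 3 => if j = 2 then (1:ℂ) else 0)) hc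
  simp at this

private lemma el6_three_ne : (3 : MvPolynomial (Fin 3) ℂ) ≠ 0 := by
  intro hc
  have := congrArg (eval (fun _ : Fin 3 => (0:ℂ))) hc
  simp only [map_ofNat, map_zero] at this
  norm_num at this

private lemma el6_hom_h :
    (-(2 * X 0 ^ 3 + 2 * X 1 ^ 3 + X 2 ^ 3) : MvPolynomial (Fin 3) ℂ).IsHomogeneous 3 := by
  have h0 := (isHomogeneous_X ℂ (0 : Fin 3)).pow 3
  have h1 := (isHomogeneous_X ℂ (1 : Fin 3)).pow 3
  have h2 := (isHomogeneous_X ℂ (2 : Fin 3)).pow 3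
  have e : (-(2 * X 0 ^ 3 + 2 * X 1 ^ 3 + X 2 ^ 3) : MvPolynomial (Fin 3) ℂ)
      = -(((X 0 ^ 3 + X 0 ^ 3) + (X 1 ^ 3 + X 1 ^ 3)) + X 2 ^ 3) := by ring
  rw [e]
  exact (((h0.add h0).add (h1.add h1)).add h2).neg

/-- The Jacobian syzygy module of the defining polynomial of `EL₆` is generated by
two syzygies, with homogeneous components, of degrees 2 and 3. -/
theorem syzygy_module_EL6_free :
    ∃ r₁ r₂ : Fin 3 → MvPolynomial (Fin 3) ℂ,
      (∀ i, (r₁ i).IsHomogeneous 2) ∧ (∀ i, (r₂ i).IsHomogeneous 3) ∧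
      ∀ v : Fin 3 → MvPolynomial (Fin 3) ℂ,
        (v 0 * pderiv 0 (((X 0) ^ 3 + (X 1) ^ 3 + (X 2) ^ 3) * ((X 0) ^ 3 + (X 1) ^ 3))
          + v 1 * pderiv 1 (((X 0) ^ 3 + (X 1) ^ 3 + (X 2) ^ 3) * ((X 0) ^ 3 + (X 1) ^ 3))
          + v 2 * pderiv 2 (((X 0) ^ 3 + (X 1) ^ 3 + (X 2) ^ 3) * ((X 0) ^ 3 + (X 1) ^ 3))
            = 0) ↔
        v ∈ Submodule.span (MvPolynomial (Fin 3) ℂ) {r₁, r₂} := by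
  classical
  refine ⟨![X 1 ^ 2, -(X 0 ^ 2), 0],
          ![X 0 * X 2 ^ 2, X 1 * X 2 ^ 2, -(2 * X 0 ^ 3 + 2 * X 1 ^ 3 + X 2 ^ 3)], ?_, ?_, ?_⟩
  · intro i
    fin_cases i
    · exact (isHomogeneous_X ℂ (1 : Fin 3)).pow 2
    · exact ((isHomogeneous_X ℂ (0 : Fin 3)).pow 2).neg
    · exact isHomogeneous_zero _ _ _
  · intro i
    fin_cases i
    · exact (isHomogeneous_X ℂ (0 : Fin 3)).mul ((isHomogeneous_X ℂ (2 : Fin 3)).pow 2)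
    · exact (isHomogeneous_X ℂ (1 : Fin 3)).mul ((isHomogeneous_X ℂ (2 : Fin 3)).pow 2)
    · exact el6_hom_h
  · intro v
    set x : MvPolynomial (Fin 3) ℂ := X 0 with hxdef
    set y : MvPolynomial (Fin 3) ℂ := X 1 with hydef
    set z : MvPolynomial (Fin 3) ℂ := X 2 with hzdef
    have D0 : pderiv (0 : Fin 3) ((x ^ 3 + y ^ 3 + z ^ 3) * (x ^ 3 + y ^ 3))
        = 3 * x ^ 2 * (2 * x ^ 3 + 2 * y ^ 3 + z ^ 3) := by
      simp only [hxdef, hydef, hzdef]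
      simp [pderiv_mul, pderiv_pow, pderiv_X, Pi.single_apply]
      ring
    have D1 : pderiv (1 : Fin 3) ((x ^ 3 + y ^ 3 + z ^ 3) * (x ^ 3 + y ^ 3))
        = 3 * y ^ 2 * (2 * x ^ 3 + 2 * y ^ 3 + z ^ 3) := by
      simp only [hxdef, hydef, hzdef]
      simp [pderiv_mul, pderiv_pow, pderiv_X, Pi.single_apply]
      ring
    have D2 : pderiv (2 : Fin 3) ((x ^ 3 + y ^ 3 + z ^ 3) * (x ^ 3 + y ^ 3))
        = 3 * z ^ 2 * (x ^ 3 + y ^ 3) := by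
      simp only [hxdef, hydef, hzdef]
      simp [pderiv_mul, pderiv_pow, pderiv_X, Pi.single_apply]
      ring
    rw [D0, D1, D2]
    constructor
    · intro hv
      have hzp := el6_prime_X 2
      have hxp := el6_prime_X 0
      -- cancel the factor 3
      have E0 : (2 * (x ^ 3 + y ^ 3) + z ^ 3) * (x ^ 2 * v 0 + y ^ 2 * v 1)
          + z ^ 2 * (x ^ 3 + y ^ 3) * v 2 = 0 := by
        have h3 : (3 : MvPolynomial (Fin 3) ℂ)
            * ((2 * (x ^ 3 + y ^ 3) + z ^ 3) * (x ^ 2 * v 0 + y ^ 2 * v 1)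
                + z ^ 2 * (x ^ 3 + y ^ 3) * v 2) = 0 := by
          linear_combination hv
        rcases mul_eq_zero.mp h3 with h | h
        · exact absurd h el6_three_ne
        · exact h
      -- first division by z^3
      obtain ⟨c₁, hc₁⟩ : (z ^ 3 : MvPolynomial (Fin 3) ℂ)
          ∣ (2 * (x ^ 2 * v 0 + y ^ 2 * v 1) + z ^ 2 * v 2) := by
        refine hzp.pow_dvd_of_dvd_mul_left 3 el6_ndvd_zg ?_
        exact ⟨-(x ^ 2 * v 0 + y ^ 2 * v 1), by linear_combination E0⟩
      -- divide 2*A by z^2, removing the unit 2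
      obtain ⟨B, hB⟩ : ∃ B, x ^ 2 * v 0 + y ^ 2 * v 1 = z ^ 2 * B := by
        refine ⟨C (2⁻¹ : ℂ) * (z * c₁ - v 2), ?_⟩
        have h2 : (C (2⁻¹ : ℂ) : MvPolynomial (Fin 3) ℂ) * 2 = 1 := by
          rw [(map_ofNat (C : ℂ →+* MvPolynomial (Fin 3) ℂ) 2).symm, ← C_mul]
          norm_num
        calc x ^ 2 * v 0 + y ^ 2 * v 1
            = (C (2⁻¹ : ℂ) * 2) * (x ^ 2 * v 0 + y ^ 2 * v 1) := by rw [h2, one_mul]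
          _ = C (2⁻¹ : ℂ) * (2 * (x ^ 2 * v 0 + y ^ 2 * v 1)) := by ring
          _ = C (2⁻¹ : ℂ) * (z ^ 2 * (z * c₁ - v 2)) := by
              rw [show (2 : MvPolynomial (Fin 3) ℂ) * (x ^ 2 * v 0 + y ^ 2 * v 1)
                  = z ^ 2 * (z * c₁ - v 2) by linear_combination hc₁]
          _ = z ^ 2 * (C (2⁻¹ : ℂ) * (z * c₁ - v 2)) := by ring
      -- second stage: cancel z^2
      have E2 : (x ^ 3 + y ^ 3) * (2 * B + v 2) = z ^ 3 * (-B) := by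
        have h' : z ^ 2 * ((x ^ 3 + y ^ 3) * (2 * B + v 2)) = z ^ 2 * (z ^ 3 * (-B)) := by
          linear_combination E0 - (2 * (x ^ 3 + y ^ 3) + z ^ 3) * hB
        exact mul_left_cancel₀ (pow_ne_zero 2 (X_ne_zero 2)) h'
      obtain ⟨c₂, hc₂⟩ : (z ^ 3 : MvPolynomial (Fin 3) ℂ) ∣ (2 * B + v 2) :=
        hzp.pow_dvd_of_dvd_mul_left 3 el6_ndvd_zg ⟨-B, E2⟩
      have E3 : (x ^ 3 + y ^ 3) * c₂ = -B := by
        have h' : z ^ 3 * ((x ^ 3 + y ^ 3) * c₂) = z ^ 3 * (-B) := by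
          linear_combination E2 - (x ^ 3 + y ^ 3) * hc₂
        exact mul_left_cancel₀ (pow_ne_zero 3 (X_ne_zero 2)) h'
      have hv2 : v 2 = (2 * (x ^ 3 + y ^ 3) + z ^ 3) * c₂ := by
        linear_combination hc₂ - 2 * E3
      -- cancel h = 2g + z^3
      have E5 : (x ^ 2 * v 0 + y ^ 2 * v 1) + z ^ 2 * (x ^ 3 + y ^ 3) * c₂ = 0 := by
        have hne : (2 * (x ^ 3 + y ^ 3) + z ^ 3 : MvPolynomial (Fin 3) ℂ) ≠ 0 := by
          intro hc
          exact el6_h_ne (by linear_combination hc)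
        have h' : (2 * (x ^ 3 + y ^ 3) + z ^ 3)
            * ((x ^ 2 * v 0 + y ^ 2 * v 1) + z ^ 2 * (x ^ 3 + y ^ 3) * c₂)
            = (2 * (x ^ 3 + y ^ 3) + z ^ 3) * 0 := by
          linear_combination E0 - z ^ 2 * (x ^ 3 + y ^ 3) * hv2
        exact mul_left_cancel₀ hne h'
      -- divide by x^2
      obtain ⟨t, ht⟩ : (x ^ 2 : MvPolynomial (Fin 3) ℂ) ∣ (-(v 1 + c₂ * y * z ^ 2)) := by
        refine hxp.pow_dvd_of_dvd_mul_left 2 el6_ndvd_xy ?_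
        exact ⟨v 0 + c₂ * x * z ^ 2, by linear_combination -E5⟩
      have hv1 : v 1 = -(x ^ 2) * t - c₂ * y * z ^ 2 := by linear_combination -ht
      have hv0 : v 0 = y ^ 2 * t - c₂ * x * z ^ 2 := by
        have h' : x ^ 2 * (v 0 + c₂ * x * z ^ 2) = x ^ 2 * (y ^ 2 * t) := by
          linear_combination E5 + y ^ 2 * ht
        have h'' := mul_left_cancel₀ (pow_ne_zero 2 (X_ne_zero 0)) h'
        linear_combination h''
      rw [Submodule.mem_span_pair]
      refine ⟨t, -c₂, ?_⟩
      funext i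
      fin_cases i
      · show t * (y ^ 2) + -c₂ * (x * z ^ 2) = v 0
        linear_combination -hv0
      · show t * (-(x ^ 2)) + -c₂ * (y * z ^ 2) = v 1
        linear_combination -hv1
      · show t * 0 + -c₂ * (-(2 * x ^ 3 + 2 * y ^ 3 + z ^ 3)) = v 2
        linear_combination -hv2
    · intro hv
      rw [Submodule.mem_span_pair] at hv
      obtain ⟨a, b, hab⟩ := hv
      have h0 : a * (y ^ 2) + b * (x * z ^ 2) = v 0 := congrFun hab 0
      have h1 : a * (-(x ^ 2)) + b * (y * z ^ 2) = v 1 := congrFun hab 1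
      have h2 : a * 0 + b * (-(2 * x ^ 3 + 2 * y ^ 3 + z ^ 3)) = v 2 := congrFun hab 2
      linear_combination (-(3 * x ^ 2 * (2 * x ^ 3 + 2 * y ^ 3 + z ^ 3))) * h0
        + (-(3 * y ^ 2 * (2 * x ^ 3 + 2 * y ^ 3 + z ^ 3))) * h1
        + (-(3 * z ^ 2 * (x ^ 3 + y ^ 3))) * h2
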